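/- Suppose f : X → Y and g : Y → X are continuous maps that are homotopy inverses of each other, and define aw(X) (resp. aw(Y)) as the set of points admitting a null sequence of non-trivial loops. Then f restricts to a map aw(X) → aw(Y), g restricts to a map aw(Y) → aw(X), and these restrictions are homotopy inverses; in particular aw(X) and aw(Y) are homotopy equivalent. -/

import Mathlib

/-- The algebraic 1-wild set: points admitting a null sequence of non-null-homotopic loops. -/
def awSet (X : Type*) [TopologicalSpace X] : Set X :=
  {x | ∃ γ : ℕ → Path x x, (∀ n, ¬(γ n).Homotopic (Path.refl x)) ∧
    ∀ U ∈ nhds x, ∀ᶠ n in Filter.atTop, Set.range (γ n) ⊆ U}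

open CategoryTheory FundamentalGroupoid FundamentalGroupoidFunctor in
open scoped FundamentalGroupoid in
attribute [local instance] Path.Homotopic.setoid in
/-- Free homotopy of self-maps preserves triviality of mapped loops. -/
lemma loop_triv_iff_of_homotopy {X : Type*} [TopologicalSpace X] {φ ψ : C(X, X)}
    (H : φ.Homotopy ψ) (x : X) (γ : Path x x) :
    ((γ.map φ.continuous).Homotopic (Path.refl (φ x)) ↔
      (γ.map ψ.continuous).Homotopic (Path.refl (ψ x))) := by
  let X' : TopCat := TopCat.of X
  let φ' : C(X', X') := φ
  let ψ' : C(X', X') := ψ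
  let H'' : φ'.Homotopy ψ' := H
  let p : @fromTop X' x ⟶ fromTop x := ⟦γ⟧
  have nat := ContinuousMap.Homotopy.eq_diag_path H'' p
  have key : (πₘ (TopCat.ofHom φ')).map p ≫ ⟦H''.evalAt x⟧ = ⟦H''.evalAt x⟧ ≫ (πₘ (TopCat.ofHom ψ')).map p :=
    nat.1.trans nat.2.symm
  let a : @fromTop X' (φ' x) ⟶ fromTop (φ' x) := ⟦γ.map φ'.continuous⟧
  let b : @fromTop X' (ψ' x) ⟶ fromTop (ψ' x) := ⟦γ.map ψ'.continuous⟧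
  let e : @fromTop X' (φ' x) ⟶ fromTop (ψ' x) := ⟦H''.evalAt x⟧
  have key2 : a ≫ e = e ≫ b := by with_unfolding_all exact key
  constructor
  · intro h
    have h1 : a = 𝟙 (@fromTop X' (φ' x)) :=
      (Quotient.sound h).trans (id_eq_path_refl (@fromTop X' (φ' x))).symm
    rw [h1, Category.id_comp] at key2
    have h2 : b = 𝟙 (@fromTop X' (ψ' x)) := (cancel_epi e).mp (key2.symm.trans (Category.comp_id e).symm)
    exact Quotient.exact (h2.trans (id_eq_path_refl (@fromTop X' (ψ' x))))
  · intro h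
    have h1 : b = 𝟙 (@fromTop X' (ψ' x)) :=
      (Quotient.sound h).trans (id_eq_path_refl (@fromTop X' (ψ' x))).symm
    rw [h1, Category.comp_id] at key2
    have h2 : a = 𝟙 (@fromTop X' (φ' x)) := (cancel_mono e).mp (key2.trans (Category.id_comp e).symm)
    exact Quotient.exact (h2.trans (id_eq_path_refl (@fromTop X' (φ' x))))

/-- If mapped loops being trivial forces triviality, the map sends `awSet` into `awSet`. -/
lemma awSet_mapsTo {X X' : Type*} [TopologicalSpace X] [TopologicalSpace X'] (φ : C(X, X'))
    (hφ : ∀ (x : X) (γ : Path x x),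
      (γ.map φ.continuous).Homotopic (Path.refl (φ x)) → γ.Homotopic (Path.refl x)) :
    ∀ x ∈ awSet X, φ x ∈ awSet X' := by
  rintro x ⟨γ, hγ, hsmall⟩
  refine ⟨fun n => (γ n).map φ.continuous, fun n h => hγ n (hφ x (γ n) h), fun U hU => ?_⟩
  have hV : φ ⁻¹' U ∈ nhds x := φ.continuous.continuousAt hU
  filter_upwards [hsmall _ hV] with n hn
  rw [Path.map_coe, Set.range_comp]
  exact Set.image_subset_iff.mpr hn

open unitInterval in
/-- A homotopy from `φ` to the identity restricts to a homotopy on the wild set. -/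
lemma awSet_homotopic_id {X : Type*} [TopologicalSpace X] {φ : C(X, X)}
    (H : φ.Homotopy (ContinuousMap.id X)) (Φ : C(awSet X, awSet X))
    (hΦ : ∀ x : awSet X, (Φ x : X) = φ (x : X)) :
    Φ.Homotopic (ContinuousMap.id (awSet X)) := by
  -- each time-slice of `H` maps `awSet X` into itself
  have slice : ∀ (t : I) (x : X), x ∈ awSet X → H (t, x) ∈ awSet X := by
    intro t
    let φt : C(X, X) := ⟨fun z => H (t, z), H.continuous.comp (by continuity)⟩
    have Ht : φt.Homotopy (ContinuousMap.id X) :=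
      { toContinuousMap := ⟨fun p => H (σ (σ t * σ p.1), p.2),
          H.continuous.comp (Continuous.prodMk
            (continuous_symm.comp ((Continuous.subtype_mk
              (continuous_const.mul (continuous_subtype_val.comp
                (continuous_symm.comp continuous_fst))) _)))
            continuous_snd)⟩
        map_zero_left := fun z => by simp [φt]
        map_one_left := fun z => by simp }
    have := awSet_mapsTo φt (fun x γ h =>
      (Path.map_id γ) ▸ ((loop_triv_iff_of_homotopy Ht x γ).mp h))
    exact this
  refine ⟨⟨⟨fun p => ⟨H (p.1, (p.2 : X)), slice p.1 _ p.2.2⟩, ?_⟩, ?_, ?_⟩⟩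
  · exact (H.continuous.comp (by continuity)).subtype_mk _
  · intro x
    ext
    simp [hΦ x]
  · intro x
    ext
    simp

theorem stmt6 {X Y : Type*} [TopologicalSpace X] [TopologicalSpace Y]
    (f : C(X, Y)) (g : C(Y, X))
    (hgf : (g.comp f).Homotopic (ContinuousMap.id X))
    (hfg : (f.comp g).Homotopic (ContinuousMap.id Y)) :
    (∀ x ∈ awSet X, f x ∈ awSet Y) ∧ (∀ y ∈ awSet Y, g y ∈ awSet X) ∧
    ∃ (F : C(awSet X, awSet Y)) (G : C(awSet Y, awSet X)),
      (∀ x : awSet X, (F x : Y) = f (x : X)) ∧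
      (∀ y : awSet Y, (G y : X) = g (y : Y)) ∧
      (G.comp F).Homotopic (ContinuousMap.id (awSet X)) ∧
      (F.comp G).Homotopic (ContinuousMap.id (awSet Y)) := by
  obtain ⟨H⟩ := hgf
  obtain ⟨H'⟩ := hfg
  have hf : ∀ x ∈ awSet X, f x ∈ awSet Y := by
    apply awSet_mapsTo
    intro x γ h
    have h2 : ((γ.map f.continuous).map g.continuous).Homotopic
        (Path.refl (g (f x))) := by
      exact Path.Homotopic.map h g
    rw [Path.map_map] at h2
    have := (loop_triv_iff_of_homotopy H x γ).mp h2
    exact this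
  have hg : ∀ y ∈ awSet Y, g y ∈ awSet X := by
    apply awSet_mapsTo
    intro y γ h
    have h2 : ((γ.map g.continuous).map f.continuous).Homotopic
        (Path.refl (f (g y))) := by
      exact Path.Homotopic.map h f
    rw [Path.map_map] at h2
    have := (loop_triv_iff_of_homotopy H' y γ).mp h2
    exact this
  refine ⟨hf, hg, ⟨fun x => ⟨f x, hf x x.2⟩,
    (f.continuous.comp continuous_subtype_val).subtype_mk _⟩,
    ⟨fun y => ⟨g y, hg y y.2⟩,
    (g.continuous.comp continuous_subtype_val).subtype_mk _⟩,
    fun _ => rfl, fun _ => rfl, ?_, ?_⟩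
  · exact awSet_homotopic_id H _ (fun x => rfl)
  · exact awSet_homotopic_id H' _ (fun y => rfl)
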